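/- Pointwise sparse domination of sliced shifts (key proposition): let m ≥ 1, P₀ a dyadic cube, and α a Carleson sequence on 𝒟(P₀). For nonnegative integrable f₁,…,f_k on P₀ there exists a (1/2)-sparse collection 𝒮 ⊆ 𝒟(P₀) such that 𝒜^{m;0}_{P₀,α} f⃗(x) ≤ C₁ ‖α‖_{Car(P₀)} Σ_{Q ∈ 𝒮} (∏_{i=1}^k ⟨f_i⟩_Q) 1_Q(x) for all x ∈ P₀, where C₁ depends only on k and d (one may take C₁ = 2^{2+k(6+d(2k−1))}), and in particular is independent of m. -/

import Mathlib

open MeasureTheory ENNReal Set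
noncomputable section

/-- A dyadic cube in `ℝ^d`: generation `gen` (side length `2^{-gen}`) and
position `pos` (lower-left corner `pos * 2^{-gen}`). -/
structure DyadicCube (d : ℕ) where
  gen : ℤ
  pos : Fin d → ℤ

namespace DyadicCube
variable {d : ℕ}

/-- The half-open cube represented by `Q`. -/
def toSet (Q : DyadicCube d) : Set (Fin d → ℝ) :=
  {x | ∀ i, (Q.pos i : ℝ) * (2 : ℝ) ^ (-Q.gen) ≤ x i ∧
        x i < ((Q.pos i : ℝ) + 1) * (2 : ℝ) ^ (-Q.gen)}

/-- Lebesgue measure of the cube. -/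
def vol (Q : DyadicCube d) : ℝ≥0∞ := volume Q.toSet

/-- The dyadic parent of a cube. -/
def parent (Q : DyadicCube d) : DyadicCube d :=
  ⟨Q.gen - 1, fun i => Int.fdiv (Q.pos i) 2⟩

/-- The `m`-th dyadic ancestor of a cube. -/
def ancestor (m : ℕ) (Q : DyadicCube d) : DyadicCube d := parent^[m] Q

/-- `Q.In P`: `Q` is a dyadic subcube of `P`. -/
def In (Q P : DyadicCube d) : Prop := P.gen ≤ Q.gen ∧ Q.toSet ⊆ P.toSet

/-- Average of a nonnegative (extended-real-valued) function over a cube. -/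
def avg (Q : DyadicCube d) (f : (Fin d → ℝ) → ℝ≥0∞) : ℝ≥0∞ :=
  (∫⁻ x in Q.toSet, f x) / Q.vol

/-- Average of a real-valued function over a cube. -/
def avgR (Q : DyadicCube d) (f : (Fin d → ℝ) → ℝ) : ℝ :=
  (∫ x in Q.toSet, f x) / (Q.vol).toReal

/-- `α` is a Carleson sequence on `𝒟(P₀)` with constant `C`. -/
def Carleson (P₀ : DyadicCube d) (α : DyadicCube d → ℝ≥0∞) (C : ℝ≥0∞) : Prop :=
  ∀ P : DyadicCube d, P.In P₀ →
    ∑' Q : {Q : DyadicCube d // Q.In P}, α Q.1 * Q.1.vol ≤ C * P.vol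

/-- Real-valued version of the Carleson condition. -/
def CarlesonR (P₀ : DyadicCube d) (α : DyadicCube d → ℝ) (C : ℝ) : Prop :=
  ∀ P : DyadicCube d, P.In P₀ →
    ∑' Q : {Q : DyadicCube d // Q.In P}, α Q.1 * (Q.1.vol).toReal ≤ C * (P.vol).toReal

/-- `η`-sparse collection of dyadic cubes. -/
def Sparse (η : ℝ≥0∞) (S : Set (DyadicCube d)) : Prop :=
  ∃ E : DyadicCube d → Set (Fin d → ℝ),
    (∀ Q ∈ S, MeasurableSet (E Q) ∧ E Q ⊆ Q.toSet ∧ η * Q.vol ≤ volume (E Q)) ∧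
    S.Pairwise fun Q Q' => Disjoint (E Q) (E Q')

/-- The `k`-linear positive dyadic shift of complexity `m` on `𝒟(P₀)`. -/
def shift (P₀ : DyadicCube d) (α : DyadicCube d → ℝ≥0∞) (m : ℕ) {k : ℕ}
    (f : Fin k → (Fin d → ℝ) → ℝ≥0∞) (x : Fin d → ℝ) : ℝ≥0∞ :=
  ∑' Q : {Q : DyadicCube d // Q.In P₀ ∧ P₀.gen + m ≤ Q.gen},
    α Q.1 * (∏ i, (ancestor m Q.1).avg (f i)) * Q.1.toSet.indicator 1 x

/-- The sliced shift `𝒜^{m;0}_{P,α}`, summing only over generations `jm`, `j ≥ 1`,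
relative to `P`. -/
def slicedShift (P : DyadicCube d) (α : DyadicCube d → ℝ≥0∞) (m : ℕ) {k : ℕ}
    (f : Fin k → (Fin d → ℝ) → ℝ≥0∞) (x : Fin d → ℝ) : ℝ≥0∞ :=
  ∑' Q : {Q : DyadicCube d // Q.In P ∧ ∃ j : ℕ, 1 ≤ j ∧ Q.gen = P.gen + j * m},
    α Q.1 * (∏ i, (ancestor m Q.1).avg (f i)) * Q.1.toSet.indicator 1 x

/-- Real-valued `k`-linear positive dyadic shift of complexity `m`. -/
def shiftR (P₀ : DyadicCube d) (α : DyadicCube d → ℝ) (m : ℕ) {k : ℕ}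
    (f : Fin k → (Fin d → ℝ) → ℝ) (x : Fin d → ℝ) : ℝ :=
  ∑' Q : {Q : DyadicCube d // Q.In P₀ ∧ P₀.gen + m ≤ Q.gen},
    α Q.1 * (∏ i, (ancestor m Q.1).avgR (f i)) * Q.1.toSet.indicator 1 x

/-- Real-valued sliced shift `𝒜^{m;0}_{P,α}`. -/
def slicedShiftR (P : DyadicCube d) (α : DyadicCube d → ℝ) (m : ℕ) {k : ℕ}
    (f : Fin k → (Fin d → ℝ) → ℝ) (x : Fin d → ℝ) : ℝ :=
  ∑' Q : {Q : DyadicCube d // Q.In P ∧ ∃ j : ℕ, 1 ≤ j ∧ Q.gen = P.gen + j * m},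
    α Q.1 * (∏ i, (ancestor m Q.1).avgR (f i)) * Q.1.toSet.indicator 1 x

/-- The positive sparse operator `𝒜⁰_𝒮`. -/
def sparseOp (S : Set (DyadicCube d)) {k : ℕ}
    (f : Fin k → (Fin d → ℝ) → ℝ≥0∞) (x : Fin d → ℝ) : ℝ≥0∞ :=
  ∑' Q : S, (∏ i, (Q : DyadicCube d).avg (f i)) * (Q : DyadicCube d).toSet.indicator 1 x

end DyadicCube

open DyadicCube

section Geometry
open DyadicCube

variable {d : ℕ}

lemma toSet_eq_pi (Q : DyadicCube d) :
    Q.toSet = Set.univ.pi (fun i => Set.Ico ((Q.pos i : ℝ) * (2:ℝ) ^ (-Q.gen))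
      (((Q.pos i : ℝ) + 1) * (2:ℝ) ^ (-Q.gen))) := by
  ext x; simp [DyadicCube.toSet, Set.mem_pi, Set.mem_Ico]

lemma measurableSet_toSet (Q : DyadicCube d) : MeasurableSet Q.toSet := by
  rw [toSet_eq_pi]; exact MeasurableSet.univ_pi fun i => measurableSet_Ico

lemma vol_eq (Q : DyadicCube d) : Q.vol = (ENNReal.ofReal ((2:ℝ) ^ (-Q.gen))) ^ d := by
  rw [DyadicCube.vol, toSet_eq_pi, volume_pi_pi]
  have h : ∀ i : Fin d, volume (Set.Ico ((Q.pos i : ℝ) * (2:ℝ) ^ (-Q.gen))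
      (((Q.pos i : ℝ) + 1) * (2:ℝ) ^ (-Q.gen))) = ENNReal.ofReal ((2:ℝ) ^ (-Q.gen)) := by
    intro i; rw [Real.volume_Ico]; congr 1; ring
  simp only [h, Finset.prod_const, Finset.card_univ, Fintype.card_fin]

lemma vol_pos (Q : DyadicCube d) : 0 < Q.vol := by
  rw [vol_eq]
  rw [pos_iff_ne_zero]
  exact pow_ne_zero _ (ENNReal.ofReal_pos.mpr (zpow_pos two_pos _)).ne'

lemma vol_ne_top (Q : DyadicCube d) : Q.vol ≠ ⊤ := by
  rw [vol_eq]
  exact pow_ne_top ENNReal.ofReal_ne_top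

lemma vol_lt_top (Q : DyadicCube d) : Q.vol < ⊤ := lt_top_iff_ne_top.mpr (vol_ne_top Q)

lemma int_eq_of_overlap {w : ℝ} (hw : 0 < w) {p q : ℤ} {t : ℝ}
    (h1 : (p:ℝ)*w ≤ t) (h2 : t < ((p:ℝ)+1)*w) (h3 : (q:ℝ)*w ≤ t) (h4 : t < ((q:ℝ)+1)*w) :
    p = q := by
  have b1 : (p:ℝ) < (q:ℝ)+1 := (mul_lt_mul_iff_left₀ hw).mp (lt_of_le_of_lt h1 h4)
  have b2 : (q:ℝ) < (p:ℝ)+1 := (mul_lt_mul_iff_left₀ hw).mp (lt_of_le_of_lt h3 h2)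
  have c1 : p < q+1 := by exact_mod_cast b1
  have c2 : q < p+1 := by exact_mod_cast b2
  omega

lemma corner_mem (Q : DyadicCube d) :
    (fun i => (Q.pos i : ℝ) * (2:ℝ)^(-Q.gen)) ∈ Q.toSet := by
  intro i
  have hw : (0:ℝ) < (2:ℝ)^(-Q.gen) := zpow_pos two_pos _
  exact ⟨le_refl _, (mul_lt_mul_iff_left₀ hw).mpr (lt_add_one _)⟩

lemma toSet_nonempty (Q : DyadicCube d) : Q.toSet.Nonempty := ⟨_, corner_mem Q⟩

lemma eq_of_gen_eq {P Q : DyadicCube d} (hg : P.gen = Q.gen) {x : Fin d → ℝ}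
    (hxQ : x ∈ Q.toSet) (hxP : x ∈ P.toSet) : Q = P := by
  obtain ⟨G, pp⟩ := P
  obtain ⟨g, qq⟩ := Q
  simp only at hg
  subst hg
  have : qq = pp := by
    funext i
    obtain ⟨h1, h2⟩ := hxQ i
    obtain ⟨h3, h4⟩ := hxP i
    exact int_eq_of_overlap (zpow_pos two_pos _) h1 h2 h3 h4
  rw [this]

/-- key nesting lemma: a finer dyadic cube meeting a coarser one is contained in it. -/
lemma toSet_subset {P Q : DyadicCube d} (hg : P.gen ≤ Q.gen) {x : Fin d → ℝ}
    (hxQ : x ∈ Q.toSet) (hxP : x ∈ P.toSet) : Q.toSet ⊆ P.toSet := by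
  set n : ℕ := (Q.gen - P.gen).toNat with hn'
  have hNW : (2:ℝ)^(-P.gen) = ((2:ℤ)^n : ℝ) * (2:ℝ)^(-Q.gen) := by
    push_cast
    rw [← zpow_natCast (2:ℝ) n, ← zpow_add₀ (two_ne_zero)]
    congr 1
    omega
  intro y hy i
  obtain ⟨h1, h2⟩ := hxQ i
  obtain ⟨h3, h4⟩ := hxP i
  obtain ⟨h5, h6⟩ := hy i
  have hw : (0:ℝ) < (2:ℝ)^(-Q.gen) := zpow_pos two_pos _
  have i1 : ((P.pos i * 2^n : ℤ) : ℝ) < ((Q.pos i + 1 : ℤ) : ℝ) := by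
    have r1 : ((P.pos i * 2^n : ℤ) : ℝ) * (2:ℝ)^(-Q.gen)
        < ((Q.pos i + 1 : ℤ) : ℝ) * (2:ℝ)^(-Q.gen) := by
      calc ((P.pos i * 2^n : ℤ) : ℝ) * (2:ℝ)^(-Q.gen)
          = (P.pos i : ℝ) * ((2:ℝ)^(-P.gen)) := by rw [hNW]; push_cast; ring
        _ ≤ x i := h3
        _ < ((Q.pos i : ℝ) + 1) * (2:ℝ)^(-Q.gen) := h2
        _ = ((Q.pos i + 1 : ℤ) : ℝ) * (2:ℝ)^(-Q.gen) := by push_cast; ring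
    exact (mul_lt_mul_iff_left₀ hw).mp r1
  have i2 : ((Q.pos i : ℤ) : ℝ) < (((P.pos i + 1) * 2^n : ℤ) : ℝ) := by
    have r2 : ((Q.pos i : ℤ) : ℝ) * (2:ℝ)^(-Q.gen)
        < (((P.pos i + 1) * 2^n : ℤ) : ℝ) * (2:ℝ)^(-Q.gen) := by
      calc ((Q.pos i : ℤ) : ℝ) * (2:ℝ)^(-Q.gen) ≤ x i := h1
        _ < ((P.pos i : ℝ) + 1) * (2:ℝ)^(-P.gen) := h4
        _ = (((P.pos i + 1) * 2^n : ℤ) : ℝ) * (2:ℝ)^(-Q.gen) := by rw [hNW]; push_cast; ring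
    exact (mul_lt_mul_iff_left₀ hw).mp r2
  have e1 : P.pos i * 2^n ≤ Q.pos i := by
    have : (P.pos i * 2^n : ℤ) < Q.pos i + 1 := by exact_mod_cast i1
    omega
  have e2 : Q.pos i + 1 ≤ (P.pos i + 1) * 2^n := by
    have : (Q.pos i : ℤ) < (P.pos i + 1) * 2^n := by exact_mod_cast i2
    omega
  constructor
  · calc (P.pos i : ℝ) * (2:ℝ)^(-P.gen)
        = ((P.pos i * 2^n : ℤ) : ℝ) * (2:ℝ)^(-Q.gen) := by rw [hNW]; push_cast; ring
      _ ≤ ((Q.pos i : ℤ) : ℝ) * (2:ℝ)^(-Q.gen) := by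
          apply (mul_le_mul_iff_left₀ hw).mpr; exact_mod_cast e1
      _ ≤ y i := h5
  · calc y i < ((Q.pos i : ℝ) + 1) * (2:ℝ)^(-Q.gen) := h6
      _ = ((Q.pos i + 1 : ℤ) : ℝ) * (2:ℝ)^(-Q.gen) := by push_cast; ring
      _ ≤ (((P.pos i + 1) * 2^n : ℤ) : ℝ) * (2:ℝ)^(-Q.gen) := by
          apply (mul_le_mul_iff_left₀ hw).mpr; exact_mod_cast e2
      _ = ((P.pos i : ℝ) + 1) * (2:ℝ)^(-P.gen) := by rw [hNW]; push_cast; ring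

lemma parent_gen (Q : DyadicCube d) : (parent Q).gen = Q.gen - 1 := rfl

lemma subset_parent (Q : DyadicCube d) : Q.toSet ⊆ (parent Q).toSet := by
  intro y hy i
  obtain ⟨h1, h2⟩ := hy i
  have hw : (0:ℝ) < (2:ℝ)^(-Q.gen) := zpow_pos two_pos _
  have hfd : (Q.pos i).fdiv 2 = Q.pos i / 2 := Int.fdiv_eq_ediv_of_nonneg _ (by norm_num)
  have hdm := Int.mul_ediv_add_emod (Q.pos i) 2
  have hm0 := Int.emod_nonneg (Q.pos i) (by norm_num : (2:ℤ) ≠ 0)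
  have hm2 := Int.emod_lt_of_pos (Q.pos i) (by norm_num : (0:ℤ) < 2)
  have e1 : 2 * ((Q.pos i).fdiv 2) ≤ Q.pos i := by rw [hfd]; omega
  have e2 : Q.pos i + 1 ≤ 2 * ((Q.pos i).fdiv 2) + 2 := by rw [hfd]; omega
  have hW : (2:ℝ)^(-(parent Q).gen) = 2 * (2:ℝ)^(-Q.gen) := by
    rw [parent_gen, show -(Q.gen - 1) = 1 + -Q.gen by ring,
      zpow_add₀ (two_ne_zero : (2:ℝ) ≠ 0)]
    norm_num
  have hpp : (parent Q).pos i = (Q.pos i).fdiv 2 := rfl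
  constructor
  · rw [hpp, hW]
    calc ((Q.pos i).fdiv 2 : ℝ) * (2 * (2:ℝ)^(-Q.gen))
        = (2 * ((Q.pos i).fdiv 2) : ℤ) * (2:ℝ)^(-Q.gen) := by push_cast; ring
      _ ≤ (Q.pos i : ℝ) * (2:ℝ)^(-Q.gen) := by
          apply (mul_le_mul_iff_left₀ hw).mpr; exact_mod_cast e1
      _ ≤ y i := h1
  · rw [hpp, hW]
    calc y i < ((Q.pos i : ℝ) + 1) * (2:ℝ)^(-Q.gen) := h2
      _ ≤ ((2 * ((Q.pos i).fdiv 2) + 2 : ℤ) : ℝ) * (2:ℝ)^(-Q.gen) := by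
          apply (mul_le_mul_iff_left₀ hw).mpr; exact_mod_cast e2
      _ = ((Q.pos i).fdiv 2 + 1 : ℝ) * (2 * (2:ℝ)^(-Q.gen)) := by push_cast; ring

lemma ancestor_gen (n : ℕ) (Q : DyadicCube d) : (ancestor n Q).gen = Q.gen - n := by
  induction n with
  | zero => simp [ancestor]
  | succ n ih =>
      have : ancestor (n+1) Q = parent (ancestor n Q) := by
        rw [ancestor, ancestor, Function.iterate_succ_apply']
      rw [this, parent_gen, ih]
      push_cast; ring

lemma subset_ancestor (n : ℕ) (Q : DyadicCube d) : Q.toSet ⊆ (ancestor n Q).toSet := by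
  induction n with
  | zero => simp [ancestor]
  | succ n ih =>
      have : ancestor (n+1) Q = parent (ancestor n Q) := by
        rw [ancestor, ancestor, Function.iterate_succ_apply']
      rw [this]
      exact ih.trans (subset_parent _)

lemma gen_le_of_subset (hd : 0 < d) {P Q : DyadicCube d} (hss : Q.toSet ⊆ P.toSet) :
    P.gen ≤ Q.gen := by
  by_contra hcon
  push_neg at hcon
  have hsub2 : P.toSet ⊆ Q.toSet :=
    toSet_subset hcon.le (hss (corner_mem Q)) (corner_mem Q)
  have hveq : P.vol = Q.vol := by
    rw [DyadicCube.vol, DyadicCube.vol, le_antisymm (measure_mono hss) (measure_mono hsub2)]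
  have hlt : P.vol < Q.vol := by
    rw [vol_eq, vol_eq]
    apply (ENNReal.pow_lt_pow_left_iff hd.ne').mpr
    rw [ENNReal.ofReal_lt_ofReal_iff (zpow_pos two_pos _)]
    exact zpow_lt_zpow_right₀ one_lt_two (by omega)
  exact hlt.ne hveq

lemma eq_of_toSet_eq (hd : 0 < d) {P Q : DyadicCube d} (h : Q.toSet = P.toSet) : Q = P := by
  have h1 : P.gen ≤ Q.gen := gen_le_of_subset hd h.le
  have h2 : Q.gen ≤ P.gen := gen_le_of_subset hd h.ge
  exact eq_of_gen_eq (le_antisymm h1 h2) (corner_mem Q) (h ▸ corner_mem Q)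

instance : Countable (DyadicCube d) := by
  have : Function.Injective (fun Q : DyadicCube d => (Q.gen, Q.pos)) := by
    intro a b h
    obtain ⟨g, p⟩ := a; obtain ⟨g', p'⟩ := b
    simp only [Prod.mk.injEq] at h
    simp [h.1, h.2]
  exact this.countable

end Geometry
section Stopping
open DyadicCube

variable {d : ℕ} (P₀ : DyadicCube d) (α : DyadicCube d → ℝ≥0∞) (A : ℝ≥0∞) (m : ℕ)
  {k : ℕ} (f : Fin k → (Fin d → ℝ) → ℝ≥0∞)

/-- `Q` is a cube of slice `j` in `𝒟(P₀)`. -/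
def SlicedAt (j : ℕ) (Q : DyadicCube d) : Prop :=
  Q.In P₀ ∧ Q.gen = P₀.gen + (j : ℤ) * (m : ℤ)

/-- stopping condition relative to a stopping cube `P`, for a cube `Q` at slice-gap `g` below. -/
def Bad (P Q : DyadicCube d) (g : ℕ) : Prop :=
  (∃ i, 8 * (k : ℝ≥0∞) * P.avg (f i) < Q.avg (f i)) ∨
    8 * A < ∑ l ∈ Finset.range (g+1), α (ancestor (l*m) Q)

open Classical in
/-- `stopData j Q` (for `Q` a slice-`j` cube): the minimal stopping ancestor of `Q`
together with the slice-gap to it. -/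
noncomputable def stopData : ℕ → DyadicCube d → DyadicCube d × ℕ
  | 0, _ => (P₀, 0)
  | (j+1), Q =>
      let p := stopData j (ancestor m Q)
      if Bad α A m f p.1 Q (p.2+1) then (Q, 0) else (p.1, p.2+1)

/-- the chain of sliced cubes containing `x`. -/
def chn (x : Fin d → ℝ) (j : ℕ) : DyadicCube d :=
  ⟨P₀.gen + (j:ℤ) * (m:ℤ), fun i => ⌊x i * (2:ℝ)^(P₀.gen + (j:ℤ) * (m:ℤ))⌋⟩

/-- the family of stopping cubes. -/
def stopSet : Set (DyadicCube d) :=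
  insert P₀ {Q | ∃ j : ℕ, SlicedAt P₀ m (j+1) Q ∧ stopData P₀ α A m f (j+1) Q = (Q, 0)}

/-- the stopping children of a stopping cube `Q`. -/
def chil (Q : DyadicCube d) : Set (DyadicCube d) :=
  {C | ∃ j : ℕ, SlicedAt P₀ m (j+1) C ∧ stopData P₀ α A m f (j+1) C = (C, 0) ∧
    (stopData P₀ α A m f j (ancestor m C)).1 = Q}

/-- the sparse sets. -/
def ECal (Q : DyadicCube d) : Set (Fin d → ℝ) :=
  Q.toSet \ ⋃ (R : {R : DyadicCube d // R ∈ stopSet P₀ α A m f ∧ R.toSet ⊆ Q.toSet ∧ R ≠ Q}),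
    (R : DyadicCube d).toSet

variable {P₀ α A m f}

lemma chn_gen (x : Fin d → ℝ) (j : ℕ) : (chn P₀ m x j).gen = P₀.gen + (j:ℤ) * (m:ℤ) := rfl

lemma mem_chn (x : Fin d → ℝ) (j : ℕ) : x ∈ (chn P₀ m x j).toSet := by
  intro i
  set g : ℤ := P₀.gen + (j:ℤ) * (m:ℤ)
  have hw : (0:ℝ) < (2:ℝ)^(-g) := zpow_pos two_pos _
  have hc : (2:ℝ)^(g) * (2:ℝ)^(-g) = 1 := by
    rw [← zpow_add₀ (two_ne_zero : (2:ℝ) ≠ 0)]; simp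
  have h1 : (⌊x i * (2:ℝ)^g⌋ : ℝ) ≤ x i * (2:ℝ)^g := Int.floor_le _
  have h2 : x i * (2:ℝ)^g < ⌊x i * (2:ℝ)^g⌋ + 1 := Int.lt_floor_add_one _
  constructor
  · calc (⌊x i * (2:ℝ)^g⌋ : ℝ) * (2:ℝ)^(-g) ≤ (x i * (2:ℝ)^g) * (2:ℝ)^(-g) :=
        (mul_le_mul_iff_left₀ hw).mpr h1
      _ = x i := by rw [mul_assoc, hc, mul_one]
  · calc x i = (x i * (2:ℝ)^g) * (2:ℝ)^(-g) := by rw [mul_assoc, hc, mul_one]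
      _ < ((⌊x i * (2:ℝ)^g⌋ : ℝ) + 1) * (2:ℝ)^(-g) := (mul_lt_mul_iff_left₀ hw).mpr h2

lemma chn_inj (hm : 1 ≤ m) {x : Fin d → ℝ} {a b : ℕ} (h : chn P₀ m x a = chn P₀ m x b) :
    a = b := by
  have := congrArg DyadicCube.gen h
  rw [chn_gen, chn_gen] at this
  have h2 : (a:ℤ) * m = (b:ℤ) * m := by omega
  have hm' : (m:ℤ) ≠ 0 := Int.natCast_ne_zero.mpr (by omega)
  exact_mod_cast mul_right_cancel₀ hm' h2

lemma chn_zero {x : Fin d → ℝ} (hx : x ∈ P₀.toSet) : chn P₀ m x 0 = P₀ := by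
  apply eq_of_gen_eq _ (mem_chn x 0) hx
  rw [chn_gen]; simp

lemma sliced_eq_chn {x : Fin d → ℝ} {j : ℕ} {Q : DyadicCube d}
    (hQ : SlicedAt P₀ m j Q) (hx : x ∈ Q.toSet) : Q = chn P₀ m x j := by
  apply eq_of_gen_eq _ hx (mem_chn x j)
  rw [chn_gen, hQ.2]

lemma chn_subset {x : Fin d → ℝ} {a b : ℕ} (h : a ≤ b) :
    (chn P₀ m x b).toSet ⊆ (chn P₀ m x a).toSet := by
  apply toSet_subset _ (mem_chn x b) (mem_chn x a)
  rw [chn_gen, chn_gen]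
  have : (a:ℤ) * m ≤ (b:ℤ) * m := by
    apply mul_le_mul_of_nonneg_right _ (by positivity)
    exact_mod_cast h
  omega

lemma sliced_chn {x : Fin d → ℝ} (hx : x ∈ P₀.toSet) (j : ℕ) :
    SlicedAt P₀ m j (chn P₀ m x j) := by
  have hj : (0:ℤ) ≤ (j:ℤ) * (m:ℤ) := by positivity
  refine ⟨⟨?_, ?_⟩, rfl⟩
  · rw [chn_gen]; omega
  · apply toSet_subset _ (mem_chn x j) hx
    rw [chn_gen]; omega

lemma anc_chn {x : Fin d → ℝ} (j : ℕ) :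
    ancestor m (chn P₀ m x (j+1)) = chn P₀ m x j := by
  apply eq_of_gen_eq _ (subset_ancestor m _ (mem_chn x (j+1))) (mem_chn x j)
  rw [chn_gen, ancestor_gen, chn_gen]
  push_cast; ring

lemma anc_chain {x : Fin d → ℝ} : ∀ l j, l ≤ j →
    ancestor (l*m) (chn P₀ m x j) = chn P₀ m x (j - l) := by
  intro l
  induction l with
  | zero => intro j _; simp [ancestor]
  | succ l ih =>
      intro j hlj
      obtain ⟨j', rfl⟩ : ∃ j', j = j' + 1 := ⟨j - 1, by omega⟩
      have h1 : ancestor ((l+1)*m) (chn P₀ m x (j'+1))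
          = ancestor (l*m) (ancestor m (chn P₀ m x (j'+1))) := by
        rw [ancestor, ancestor, ancestor, show (l+1)*m = l*m + m by ring,
          Function.iterate_add_apply]
      rw [h1, anc_chn, ih j' (by omega)]
      congr 1
      omega
section Stopping2
open DyadicCube

variable {d : ℕ} {P₀ : DyadicCube d} {α : DyadicCube d → ℝ≥0∞} {A : ℝ≥0∞} {m : ℕ}
  {k : ℕ} {f : Fin k → (Fin d → ℝ) → ℝ≥0∞} {x : Fin d → ℝ}

lemma alpha_le (hα : Carleson P₀ α A) {Q : DyadicCube d} (hQ : Q.In P₀) : α Q ≤ A := by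
  have h1 := hα Q hQ
  have h2 : α Q * Q.vol ≤ A * Q.vol :=
    le_trans (ENNReal.le_tsum (⟨Q, le_refl _, subset_rfl⟩ : {Q' : DyadicCube d // Q'.In Q})) h1
  exact (ENNReal.mul_le_mul_iff_left (vol_pos Q).ne' (vol_ne_top Q)).mp h2

open Classical in
lemma stopData_succ (j : ℕ) (Q : DyadicCube d) :
    stopData P₀ α A m f (j+1) Q =
      if Bad α A m f (stopData P₀ α A m f j (ancestor m Q)).1 Q
          ((stopData P₀ α A m f j (ancestor m Q)).2 + 1)
      then (Q, 0)
      else ((stopData P₀ α A m f j (ancestor m Q)).1,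
        (stopData P₀ α A m f j (ancestor m Q)).2 + 1) := by
  rfl

lemma stopData_chn (hx : x ∈ P₀.toSet) : ∀ j : ℕ, ∃ n, n ≤ j ∧
    stopData P₀ α A m f j (chn P₀ m x j) = (chn P₀ m x (j - n), n) := by
  intro j
  induction j with
  | zero => exact ⟨0, le_refl _, by rw [chn_zero hx]; rfl⟩
  | succ j ih =>
      obtain ⟨n, hn, hs⟩ := ih
      rw [stopData_succ, anc_chn, hs]
      dsimp only
      by_cases hB : Bad α A m f (chn P₀ m x (j-n)) (chn P₀ m x (j+1)) (n+1)
      · exact ⟨0, by omega, by rw [if_pos hB, Nat.sub_zero]⟩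
      · refine ⟨n+1, by omega, ?_⟩
        rw [if_neg hB, show j + 1 - (n+1) = j - n by omega]

lemma stop_step (hx : x ∈ P₀.toSet) (j : ℕ) : ∃ n, n ≤ j + 1 ∧
    stopData P₀ α A m f (j+1) (chn P₀ m x (j+1)) = (chn P₀ m x (j+1-n), n) ∧
    (n = 0 ∨ (0 < n ∧
      ¬ Bad α A m f (chn P₀ m x (j+1-n)) (chn P₀ m x (j+1)) n)) := by
  obtain ⟨n', hn', hs'⟩ := stopData_chn hx j
  rw [stopData_succ, anc_chn, hs']
  dsimp only
  by_cases hB : Bad α A m f (chn P₀ m x (j-n')) (chn P₀ m x (j+1)) (n'+1)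
  · exact ⟨0, by omega, by rw [if_pos hB, Nat.sub_zero], Or.inl rfl⟩
  · refine ⟨n'+1, by omega, ?_, Or.inr ⟨by omega, ?_⟩⟩
    · rw [if_neg hB, show j + 1 - (n'+1) = j - n' by omega]
    · rw [show j + 1 - (n'+1) = j - n' by omega]; exact hB

lemma avg_le_stop (hx : x ∈ P₀.toSet) (hk1 : 0 < k) (j : ℕ) (i : Fin k) :
    (chn P₀ m x j).avg (f i) ≤
      8 * (k:ℝ≥0∞) * ((stopData P₀ α A m f j (chn P₀ m x j)).1).avg (f i) := by
  have hone : (1:ℝ≥0∞) ≤ 8 * k := by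
    have h1 : (1:ℝ≥0∞) ≤ (k:ℝ≥0∞) := by exact_mod_cast Nat.one_le_cast.mpr hk1
    calc (1:ℝ≥0∞) ≤ (k:ℝ≥0∞) := h1
      _ ≤ 8 * k := le_mul_of_one_le_left (zero_le) (by norm_num)
  match j with
  | 0 =>
      show (chn P₀ m x 0).avg (f i) ≤ 8 * (k:ℝ≥0∞) * DyadicCube.avg P₀ (f i)
      rw [chn_zero hx]
      exact le_mul_of_one_le_left (zero_le) hone
  | (j+1) =>
      obtain ⟨n, hn, hs, hcase⟩ := stop_step hx j
      rw [hs]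
      dsimp only
      rcases hcase with h0 | ⟨hpos, hnb⟩
      · subst h0
        rw [Nat.sub_zero]
        exact le_mul_of_one_le_left (zero_le) hone
      · have := (not_or.mp hnb).1
        push_neg at this
        exact this i

lemma sigma_le (hα : Carleson P₀ α A) (hx : x ∈ P₀.toSet) (j : ℕ) :
    ∑ l ∈ Finset.range ((stopData P₀ α A m f j (chn P₀ m x j)).2 + 1),
      α (ancestor (l*m) (chn P₀ m x j)) ≤ 8 * A := by
  have hA8 : A ≤ 8 * A := le_mul_of_one_le_left (zero_le) (by norm_num)
  match j with
  | 0 =>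
      show ∑ l ∈ Finset.range (0 + 1), α (ancestor (l*m) (chn P₀ m x 0)) ≤ 8 * A
      rw [Finset.sum_range_one]
      simp only [Nat.zero_mul]
      rw [show ancestor 0 (chn P₀ m x 0) = chn P₀ m x 0 from rfl, chn_zero hx]
      exact le_trans (alpha_le hα ⟨le_refl _, subset_rfl⟩) hA8
  | (j+1) =>
      obtain ⟨n, hn, hs, hcase⟩ := stop_step hx j
      rw [hs]
      dsimp only
      rcases hcase with h0 | ⟨hpos, hnb⟩
      · subst h0
        rw [Finset.sum_range_one]
        simp only [Nat.zero_mul]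
        rw [show ancestor 0 (chn P₀ m x (j+1)) = chn P₀ m x (j+1) from rfl]
        exact le_trans (alpha_le hα (sliced_chn hx (j+1)).1) hA8
      · exact not_lt.mp ((not_or.mp hnb).2)

lemma stop_repr (hx : x ∈ P₀.toSet) (j : ℕ) : ∃ r, r ≤ j ∧
    (stopData P₀ α A m f j (chn P₀ m x j)).1 = chn P₀ m x r ∧
    (r = 0 ∨ stopData P₀ α A m f r (chn P₀ m x r) = (chn P₀ m x r, 0)) := by
  induction j with
  | zero => exact ⟨0, le_refl _, (congrArg Prod.fst (by rw [chn_zero hx]; rfl :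
      stopData P₀ α A m f 0 (chn P₀ m x 0) = (chn P₀ m x 0, 0))), Or.inl rfl⟩
  | succ j ih =>
      obtain ⟨r, hr, hrepr, hprop⟩ := ih
      rw [stopData_succ, anc_chn]
      by_cases hB : Bad α A m f (stopData P₀ α A m f j (chn P₀ m x j)).1
          (chn P₀ m x (j+1)) ((stopData P₀ α A m f j (chn P₀ m x j)).2 + 1)
      · refine ⟨j+1, le_refl _, by rw [if_pos hB], Or.inr ?_⟩
        rw [stopData_succ, anc_chn, if_pos hB]
      · rw [if_neg hB]
        exact ⟨r, by omega, hrepr, hprop⟩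

lemma stop_mem (hx : x ∈ P₀.toSet) (j : ℕ) :
    (stopData P₀ α A m f j (chn P₀ m x j)).1 ∈ stopSet P₀ α A m f ∧
      x ∈ ((stopData P₀ α A m f j (chn P₀ m x j)).1).toSet := by
  obtain ⟨r, hr, hrepr, hprop⟩ := stop_repr hx j
  rw [hrepr]
  refine ⟨?_, mem_chn x r⟩
  rcases Nat.eq_zero_or_pos r with h0 | hpos
  · subst h0
    rw [chn_zero hx]
    exact Set.mem_insert _ _
  · rcases hprop with h0 | hstop
    · omega
    · obtain ⟨r', rfl⟩ : ∃ r', r = r' + 1 := ⟨r - 1, by omega⟩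
      exact Set.mem_insert_iff.mpr (Or.inr ⟨r', sliced_chn hx (r'+1), hstop⟩)

lemma chn_subset_stop (hx : x ∈ P₀.toSet) (j : ℕ) :
    (chn P₀ m x j).toSet ⊆ ((stopData P₀ α A m f j (chn P₀ m x j)).1).toSet := by
  obtain ⟨n, hn, hs⟩ := stopData_chn hx j
  rw [hs]
  exact chn_subset (by omega)

lemma stop_mono (hx : x ∈ P₀.toSet) (r s : ℕ) :
    ((stopData P₀ α A m f (r+s) (chn P₀ m x (r+s))).1).toSet ⊆
      ((stopData P₀ α A m f r (chn P₀ m x r)).1).toSet := by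
  induction s with
  | zero => exact subset_rfl
  | succ s ih =>
      rw [show r + (s+1) = (r+s)+1 by omega, stopData_succ, anc_chn]
      by_cases hB : Bad α A m f (stopData P₀ α A m f (r+s) (chn P₀ m x (r+s))).1
          (chn P₀ m x (r+s+1)) ((stopData P₀ α A m f (r+s) (chn P₀ m x (r+s))).2 + 1)
      · rw [if_pos hB]
        exact subset_trans (subset_trans (chn_subset (by omega)) (chn_subset_stop hx (r+s))) ih
      · rw [if_neg hB]
        exact ih

lemma stopSet_In (hQ : Q ∈ stopSet P₀ α A m f) : Q.In P₀ := by
  rcases Set.mem_insert_iff.mp hQ with h | ⟨j, hsl, _⟩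
  · subst h; exact ⟨le_refl _, subset_rfl⟩
  · exact hsl.1

end Stopping2
section Tree
open DyadicCube

variable {d : ℕ} {P₀ : DyadicCube d} {α : DyadicCube d → ℝ≥0∞} {A : ℝ≥0∞} {m : ℕ}
  {k : ℕ} {f : Fin k → (Fin d → ℝ) → ℝ≥0∞}

lemma chil_sub {Q C : DyadicCube d} (hC : C ∈ chil P₀ α A m f Q) :
    C.toSet ⊆ Q.toSet ∧ C.In P₀ := by
  obtain ⟨j, hsl, hsd, hp⟩ := hC
  have hx : (fun i => (C.pos i : ℝ) * (2:ℝ)^(-C.gen)) ∈ P₀.toSet := hsl.1.2 (corner_mem C)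
  set x := fun i => (C.pos i : ℝ) * (2:ℝ)^(-C.gen) with hxdef
  have hCx : C = chn P₀ m x (j+1) := sliced_eq_chn hsl (corner_mem C)
  refine ⟨?_, hsl.1⟩
  calc C.toSet = (chn P₀ m x (j+1)).toSet := by rw [← hCx]
    _ ⊆ (chn P₀ m x j).toSet := chn_subset (by omega)
    _ ⊆ ((stopData P₀ α A m f j (chn P₀ m x j)).1).toSet :=
        chn_subset_stop (α := α) (A := A) (m := m) (f := f) hx j
    _ = Q.toSet := by rw [show chn P₀ m x j = ancestor m C by rw [hCx, anc_chn], hp]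

lemma gen_lt_of_ssubset (hd : 0 < d) {Q Q' : DyadicCube d} (hss : Q'.toSet ⊆ Q.toSet)
    (hne : Q' ≠ Q) : Q.gen < Q'.gen := by
  have h1 : Q.gen ≤ Q'.gen := gen_le_of_subset hd hss
  rcases lt_or_eq_of_le h1 with h | h
  · exact h
  · exact absurd (eq_of_gen_eq h (corner_mem Q') (hss (corner_mem Q'))) hne

lemma slice_lt_of_ssubset (hd : 0 < d) (hm : 1 ≤ m) {a b : ℕ} {Q Q' : DyadicCube d}
    (hQ : SlicedAt P₀ m a Q) (hQ' : SlicedAt P₀ m b Q') (hss : Q'.toSet ⊆ Q.toSet)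
    (hne : Q' ≠ Q) : a < b := by
  have := gen_lt_of_ssubset hd hss hne
  rw [hQ.2, hQ'.2] at this
  have h2 : (a:ℤ) * m < (b:ℤ) * m := by omega
  by_contra hcon
  push_neg at hcon
  have : (b:ℤ) * m ≤ (a:ℤ) * m := by
    apply mul_le_mul_of_nonneg_right _ (by positivity)
    exact_mod_cast hcon
  omega

/-- every proper stopping descendant of a stopping cube is inside one of its children -/
lemma exists_child (hd : 0 < d) (hm : 1 ≤ m) {Q Q' : DyadicCube d}
    (hQ : Q ∈ stopSet P₀ α A m f) (hQ' : Q' ∈ stopSet P₀ α A m f)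
    (hss : Q'.toSet ⊆ Q.toSet) (hne : Q' ≠ Q) :
    ∃ C ∈ chil P₀ α A m f Q, Q'.toSet ⊆ C.toSet := by
  classical
  -- Q' is not P₀
  rcases Set.mem_insert_iff.mp hQ' with h | ⟨j', hsl', hsd'⟩
  · exfalso
    subst h
    exact hne (eq_of_toSet_eq hd (subset_antisymm hss (stopSet_In hQ).2))
  -- the chain through a point of Q'
  have hx : (fun i => (Q'.pos i : ℝ) * (2:ℝ)^(-Q'.gen)) ∈ P₀.toSet :=
    hsl'.1.2 (corner_mem Q')
  set x := fun i => (Q'.pos i : ℝ) * (2:ℝ)^(-Q'.gen) with hxdef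
  have hxQ' : x ∈ Q'.toSet := corner_mem Q'
  have hQ'x : Q' = chn P₀ m x (j'+1) := sliced_eq_chn hsl' hxQ'
  -- identify Q on the chain, with its slice index jq and p jq = Q
  obtain ⟨jq, hjq, hQx, hpq⟩ : ∃ jq, jq < j' + 1 ∧ Q = chn P₀ m x jq ∧
      (stopData P₀ α A m f jq (chn P₀ m x jq)).1 = Q := by
    rcases Set.mem_insert_iff.mp hQ with h | ⟨jn, hsln, hsdn⟩
    · refine ⟨0, by omega, (chn_zero hx).symm ▸ h ▸ rfl, ?_⟩
      rw [show stopData P₀ α A m f 0 (chn P₀ m x 0) = (P₀, 0) from rfl]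
      exact h.symm ▸ rfl
    · have hxQ : x ∈ Q.toSet := hss hxQ'
      have hQx : Q = chn P₀ m x (jn+1) := sliced_eq_chn hsln hxQ
      refine ⟨jn+1, ?_, hQx, by rw [← hQx, hsdn]⟩
      exact slice_lt_of_ssubset hd hm hsln hsl' hss hne
  -- least index where the stopping cube changes
  have hTne : ∃ r, jq < r ∧ r ≤ j' + 1 ∧ (stopData P₀ α A m f r (chn P₀ m x r)).1 ≠ Q := by
    refine ⟨j'+1, hjq, le_refl _, ?_⟩
    rw [← hQ'x, hsd']
    exact fun h => hne (by rw [← h])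
  obtain ⟨t, ⟨ht1, ht2, ht3⟩, htmin⟩ : ∃ t, (jq < t ∧ t ≤ j' + 1 ∧
      (stopData P₀ α A m f t (chn P₀ m x t)).1 ≠ Q) ∧
      ∀ r, r < t → ¬(jq < r ∧ r ≤ j' + 1 ∧ (stopData P₀ α A m f r (chn P₀ m x r)).1 ≠ Q) :=
    ⟨Nat.find hTne, Nat.find_spec hTne, fun r hr => Nat.find_min hTne hr⟩
  have hpt1 : (stopData P₀ α A m f (t-1) (chn P₀ m x (t-1))).1 = Q := by
    rcases Nat.lt_or_ge jq (t-1) with h | h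
    · have := htmin (t-1) (by omega)
      push_neg at this
      exact this h (by omega)
    · have : t - 1 = jq := by omega
      rw [this]
      exact hpq
  obtain ⟨s, rfl⟩ : ∃ s, t = s + 1 := ⟨t - 1, by omega⟩
  have hs1 : s = s + 1 - 1 := rfl
  -- unfold the step at t = s+1
  rw [stopData_succ, anc_chn] at ht3
  by_cases hB : Bad α A m f (stopData P₀ α A m f s (chn P₀ m x s)).1 (chn P₀ m x (s+1))
      ((stopData P₀ α A m f s (chn P₀ m x s)).2 + 1)
  · refine ⟨chn P₀ m x (s+1), ⟨s, sliced_chn hx (s+1), ?_, ?_⟩, ?_⟩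
    · rw [stopData_succ, anc_chn, if_pos hB]
    · rw [anc_chn]
      rw [show s = s + 1 - 1 from rfl] at hpt1 ⊢
      exact hpt1
    · rw [hQ'x]
      exact chn_subset (by omega)
  · exfalso
    rw [if_neg hB] at ht3
    dsimp only at ht3
    rw [show s = s + 1 - 1 from rfl] at hpt1
    exact ht3 hpt1

/-- distinct children of a stopping cube have disjoint interiors -/
lemma chil_disj (hd : 0 < d) (hm : 1 ≤ m) {Q C C' : DyadicCube d}
    (hC : C ∈ chil P₀ α A m f Q) (hC' : C' ∈ chil P₀ α A m f Q) (hne : C ≠ C') :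
    Disjoint C.toSet C'.toSet := by
  -- an auxiliary asymmetric statement
  suffices h : ∀ C C' : DyadicCube d, C ∈ chil P₀ α A m f Q → C' ∈ chil P₀ α A m f Q →
      C ≠ C' → C.gen ≤ C'.gen → Disjoint C.toSet C'.toSet by
    rcases le_total C.gen C'.gen with hg | hg
    · exact h C C' hC hC' hne hg
    · exact (h C' C hC' hC hne.symm hg).symm
  clear hC hC' hne C C'
  intro C C' hC hC' hne hg
  rw [Set.disjoint_left]
  intro z hzC hzC'
  obtain ⟨j, hsl, hsd, hp⟩ := hC
  obtain ⟨j', hsl', hsd', hp'⟩ := hC'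
  have hgne : C.gen ≠ C'.gen := by
    intro h
    exact hne (eq_of_gen_eq h.symm hzC hzC')
  have hss : C'.toSet ⊆ C.toSet :=
    toSet_subset (lt_of_le_of_ne hg hgne).le hzC' hzC
  have hjj : j + 1 < j' + 1 :=
    slice_lt_of_ssubset hd hm hsl hsl' hss (fun h => hne h.symm)
  -- chain through z ∈ C'
  have hx : z ∈ P₀.toSet := hsl'.1.2 hzC'
  have hCz : C = chn P₀ m z (j+1) := sliced_eq_chn hsl hzC
  have hC'z : C' = chn P₀ m z (j'+1) := sliced_eq_chn hsl' hzC'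
  have hpt : (stopData P₀ α A m f (j+1) (chn P₀ m z (j+1))).1 = C := by
    rw [← hCz, hsd]
  have hpj' : (stopData P₀ α A m f j' (chn P₀ m z j')).1 = Q := by
    have : ancestor m C' = chn P₀ m z j' := by rw [hC'z, anc_chn]
    rw [← this, hp']
  -- monotonicity: Q = p j' ⊆ p (j+1) = C
  have hQC : Q.toSet ⊆ C.toSet := by
    have := stop_mono (α := α) (A := A) (m := m) (f := f) hx (j+1) (j' - (j+1))
    rw [show (j+1) + (j' - (j+1)) = j' by omega, hpj', hpt] at this
    exact this
  -- and C ⊆ Q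
  have hCQ : C.toSet ⊆ Q.toSet := (chil_sub ⟨j, hsl, hsd, hp⟩).1
  have hQeqC : Q = C := (eq_of_toSet_eq hd (subset_antisymm hCQ hQC)).symm
  -- but then Q is at slice j+1, while p j is at slice ≤ j
  obtain ⟨rC, hrC, hreprC, _⟩ := stop_repr (α := α) (A := A) (f := f) hx j
  have hanc : ancestor m C = chn P₀ m z j := by rw [hCz, anc_chn]
  have : Q = chn P₀ m z rC := by rw [← hreprC, ← hanc, hp]
  have h1 : chn P₀ m z (j+1) = chn P₀ m z rC := by rw [← hCz, ← hQeqC, this]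
  have := chn_inj hm h1
  omega

/-- each child satisfies a stopping (bad) condition relative to its parent -/
lemma chil_spec (hα : Carleson P₀ α A) {Q C : DyadicCube d} (hC : C ∈ chil P₀ α A m f Q) :
    (∃ i, 8 * (k:ℝ≥0∞) * Q.avg (f i) < C.avg (f i)) ∨
    (∃ g : ℕ, (∀ l, l ≤ g → (ancestor (l*m) C).In Q) ∧
      8 * A < ∑ l ∈ Finset.range (g+1), α (ancestor (l*m) C)) := by
  obtain ⟨j, hsl, hsd, hp⟩ := hC
  have hx : (fun i => (C.pos i : ℝ) * (2:ℝ)^(-C.gen)) ∈ P₀.toSet := hsl.1.2 (corner_mem C)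
  set x := fun i => (C.pos i : ℝ) * (2:ℝ)^(-C.gen) with hxdef
  have hCx : C = chn P₀ m x (j+1) := sliced_eq_chn hsl (corner_mem C)
  obtain ⟨n, hn, hsj⟩ := stopData_chn (α := α) (A := A) (f := f) hx j
  have hanc : ancestor m C = chn P₀ m x j := by rw [hCx, anc_chn]
  have hQrep : Q = chn P₀ m x (j - n) := by
    rw [← hp, hanc, hsj]
  -- extract the Bad condition from the branch taken
  have hB : Bad α A m f Q C (n + 1) := by
    by_contra hB
    rw [hCx] at hsd
    rw [stopData_succ, anc_chn, hsj] at hsd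
    dsimp only at hsd
    rw [if_neg (by rw [← hQrep, ← hCx]; exact hB)] at hsd
    have := congrArg Prod.snd hsd
    simp at this
  rcases hB with h | h
  · exact Or.inl h
  · refine Or.inr ⟨n + 1, ?_, h⟩
    intro l hl
    rw [hCx, anc_chain l (j+1) (by omega), hQrep]
    constructor
    · rw [chn_gen, chn_gen]
      have : ((j-n : ℕ):ℤ) * m ≤ ((j+1-l : ℕ):ℤ) * m := by
        apply mul_le_mul_of_nonneg_right _ (by positivity)
        exact_mod_cast (by omega : j - n ≤ j + 1 - l)
      omega
    · exact chn_subset (by omega)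

end Tree
section Meas
open DyadicCube

variable {d : ℕ} {P₀ : DyadicCube d} {α : DyadicCube d → ℝ≥0∞} {A : ℝ≥0∞} {m : ℕ}
  {k : ℕ} {f : Fin k → (Fin d → ℝ) → ℝ≥0∞}

lemma avg_mul_vol (Q : DyadicCube d) (g : (Fin d → ℝ) → ℝ≥0∞) :
    Q.avg g * Q.vol = ∫⁻ y in Q.toSet, g y :=
  ENNReal.div_mul_cancel (vol_pos Q).ne' (vol_ne_top Q)

lemma chA_bound (hd : 0 < d) (hm : 1 ≤ m) {Q : DyadicCube d} (hQmem : Q.In P₀) (i : Fin k)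
    (hfin : ∫⁻ y in P₀.toSet, f i y < ⊤) (S' : Set (DyadicCube d))
    (hS' : ∀ C ∈ S', C ∈ chil P₀ α A m f Q ∧ 8 * (k:ℝ≥0∞) * Q.avg (f i) < C.avg (f i)) :
    (∑' C : ↥S', (C : DyadicCube d).vol) * (8 * k) ≤ Q.vol := by
  have hIQ : ∫⁻ y in Q.toSet, f i y < ⊤ :=
    lt_of_le_of_lt (lintegral_mono_set hQmem.2) hfin
  by_cases h0 : Q.avg (f i) = 0
  · have hQ0 : ∫⁻ y in Q.toSet, f i y = 0 := by
      rcases ENNReal.div_eq_zero_iff.mp h0 with h | h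
      · exact h
      · exact absurd h (vol_ne_top Q)
    have hfalse : ∀ C : ↥S', False := by
      intro C
      have h1 : ∫⁻ y in (C:DyadicCube d).toSet, f i y = 0 :=
        le_antisymm (hQ0 ▸ lintegral_mono_set (chil_sub (hS' C.1 C.2).1).1) (zero_le)
      have h2 : (C:DyadicCube d).avg (f i) = 0 := by
        rw [DyadicCube.avg, h1, ENNReal.zero_div]
      have h3 := (hS' C.1 C.2).2
      simp [h0, h2] at h3
    have hz : (∑' C : ↥S', (C : DyadicCube d).vol) = 0 :=
      ENNReal.tsum_eq_zero.mpr fun C => (hfalse C).elim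
    rw [hz, zero_mul]
    exact zero_le
  · have htop : Q.avg (f i) ≠ ⊤ := (ENNReal.div_lt_top hIQ.ne (vol_pos Q).ne').ne
    have key : Q.avg (f i) * ((∑' C : ↥S', (C : DyadicCube d).vol) * (8 * k)) ≤
        Q.avg (f i) * Q.vol := by
      calc Q.avg (f i) * ((∑' C : ↥S', (C : DyadicCube d).vol) * (8 * k))
          = ∑' C : ↥S', (8 * (k:ℝ≥0∞) * Q.avg (f i)) * (C : DyadicCube d).vol := by
            rw [ENNReal.tsum_mul_left (a := 8 * (k:ℝ≥0∞) * Q.avg (f i))]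
            ring
        _ ≤ ∑' C : ↥S', ∫⁻ y in (C : DyadicCube d).toSet, f i y := by
            apply ENNReal.tsum_le_tsum
            intro C
            rw [← avg_mul_vol (C : DyadicCube d) (f i)]
            exact mul_le_mul_left (hS' C.1 C.2).2.le _
        _ = ∫⁻ y in ⋃ C : ↥S', (C : DyadicCube d).toSet, f i y := by
            rw [lintegral_iUnion (fun C => measurableSet_toSet _)
              (fun C C' hcc => chil_disj hd hm (hS' C.1 C.2).1 (hS' C'.1 C'.2).1
                (fun h => hcc (Subtype.ext h)))]
        _ ≤ ∫⁻ y in Q.toSet, f i y :=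
            lintegral_mono_set (Set.iUnion_subset fun C => (chil_sub (hS' C.1 C.2).1).1)
        _ = Q.avg (f i) * Q.vol := (avg_mul_vol Q (f i)).symm
    exact (ENNReal.mul_le_mul_iff_right h0 htop).mp key

lemma chB_bound (hd : 0 < d) (hm : 1 ≤ m) (hα : Carleson P₀ α A) {Q : DyadicCube d}
    (hQmem : Q.In P₀) (hA0 : A ≠ 0) (hAt : A ≠ ⊤) (S' : Set (DyadicCube d))
    (hS' : ∀ C ∈ S', C ∈ chil P₀ α A m f Q ∧ ∃ g : ℕ,
      (∀ l, l ≤ g → (ancestor (l*m) C).In Q) ∧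
      8 * A < ∑ l ∈ Finset.range (g+1), α (ancestor (l*m) C)) :
    (∑' C : ↥S', (C : DyadicCube d).vol) * 8 ≤ Q.vol := by
  classical
  set w : ↥S' → {R : DyadicCube d // R.In Q} → ℝ≥0∞ :=
    fun C R => if (C : DyadicCube d).toSet ⊆ (R : DyadicCube d).toSet
      then (C : DyadicCube d).vol else 0 with hw
  have step1 : ∀ C : ↥S', 8 * A * (C : DyadicCube d).vol ≤
      ∑' R : {R : DyadicCube d // R.In Q}, α (R : DyadicCube d) * w C R := by
    intro C
    obtain ⟨g, hIn, hgt⟩ := (hS' C.1 C.2).2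
    set φ : Fin (g+1) → {R : DyadicCube d // R.In Q} :=
      fun l => ⟨ancestor (l.1*m) (C : DyadicCube d), hIn l.1 (by omega)⟩ with hφ
    have hφinj : Function.Injective φ := by
      intro l l' h
      have hgen := congrArg (fun R : {R : DyadicCube d // R.In Q} => (R : DyadicCube d).gen) h
      simp only [hφ, ancestor_gen] at hgen
      have h2 : l.1 * m = l'.1 * m := by omega
      exact Fin.ext (Nat.eq_of_mul_eq_mul_right (by omega) h2)
    calc 8 * A * (C : DyadicCube d).vol
        ≤ (∑ l ∈ Finset.range (g+1), α (ancestor (l*m) (C : DyadicCube d)))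
            * (C : DyadicCube d).vol := mul_le_mul_left hgt.le _
      _ = ∑ l ∈ Finset.range (g+1),
            α (ancestor (l*m) (C : DyadicCube d)) * (C : DyadicCube d).vol :=
          Finset.sum_mul _ _ _
      _ = ∑ l : Fin (g+1), α (ancestor (l.1*m) (C : DyadicCube d)) * (C : DyadicCube d).vol :=
          (Fin.sum_univ_eq_sum_range
            (fun l => α (ancestor (l*m) (C : DyadicCube d)) * (C : DyadicCube d).vol) (g+1)).symm
      _ = ∑' l : Fin (g+1), (fun R : {R : DyadicCube d // R.In Q} => α (R : DyadicCube d) * w C R) (φ l) := by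
          rw [tsum_fintype]
          apply Finset.sum_congr rfl
          intro l _
          have hwl : w C (φ l) = (C : DyadicCube d).vol := by
            simp only [hw, hφ]
            rw [if_pos (subset_ancestor _ _)]
          simp only [hwl]
          rfl
      _ ≤ ∑' R : {R : DyadicCube d // R.In Q}, α (R : DyadicCube d) * w C R :=
          ENNReal.tsum_comp_le_tsum_of_injective hφinj _
  have step2 : ∀ R : {R : DyadicCube d // R.In Q},
      (∑' C : ↥S', w C R) ≤ (R : DyadicCube d).vol := by
    intro R
    have hrw : ∀ C : ↥S', w C R = volume
        (if (C : DyadicCube d).toSet ⊆ (R : DyadicCube d).toSet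
          then (C : DyadicCube d).toSet else (∅ : Set (Fin d → ℝ))) := by
      intro C
      by_cases h : (C : DyadicCube d).toSet ⊆ (R : DyadicCube d).toSet
      · simp only [hw, if_pos h]; rfl
      · simp only [hw, if_neg h]; rw [measure_empty]
    calc (∑' C : ↥S', w C R)
        = ∑' C : ↥S', volume (if (C : DyadicCube d).toSet ⊆ (R : DyadicCube d).toSet
            then (C : DyadicCube d).toSet else ∅) := tsum_congr hrw
      _ = volume (⋃ C : ↥S', if (C : DyadicCube d).toSet ⊆ (R : DyadicCube d).toSet
            then (C : DyadicCube d).toSet else ∅) := by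
          rw [measure_iUnion ?_ ?_]
          · intro C C' hcc
            have hdis : Disjoint (C : DyadicCube d).toSet (C' : DyadicCube d).toSet :=
              chil_disj hd hm (hS' C.1 C.2).1 (hS' C'.1 C'.2).1 (fun h => hcc (Subtype.ext h))
            simp only [Function.onFun]
            split_ifs
            · exact hdis
            · exact Set.disjoint_empty _
            · exact Set.empty_disjoint _
            · exact Set.empty_disjoint _
          · intro C
            split_ifs
            · exact measurableSet_toSet _
            · exact MeasurableSet.empty
      _ ≤ (R : DyadicCube d).vol := by
          apply measure_mono
          apply Set.iUnion_subset
          intro C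
          split_ifs with h
          · exact h
          · exact Set.empty_subset _
  have total : A * ((∑' C : ↥S', (C : DyadicCube d).vol) * 8) ≤ A * Q.vol := by
    calc A * ((∑' C : ↥S', (C : DyadicCube d).vol) * 8)
        = ∑' C : ↥S', 8 * A * (C : DyadicCube d).vol := by
          rw [ENNReal.tsum_mul_left (a := 8 * A)]
          ring
      _ ≤ ∑' C : ↥S', ∑' R : {R : DyadicCube d // R.In Q}, α (R : DyadicCube d) * w C R :=
          ENNReal.tsum_le_tsum step1
      _ = ∑' R : {R : DyadicCube d // R.In Q}, ∑' C : ↥S', α (R : DyadicCube d) * w C R :=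
          ENNReal.tsum_comm
      _ = ∑' R : {R : DyadicCube d // R.In Q}, α (R : DyadicCube d) * ∑' C : ↥S', w C R :=
          tsum_congr fun R => ENNReal.tsum_mul_left
      _ ≤ ∑' R : {R : DyadicCube d // R.In Q},
            α (R : DyadicCube d) * (R : DyadicCube d).vol :=
          ENNReal.tsum_le_tsum fun R => mul_le_mul_right (step2 R) _
      _ ≤ A * Q.vol := hα Q hQmem
  exact (ENNReal.mul_le_mul_iff_right hA0 hAt).mp total

end Meas
section ECalSec
open DyadicCube

variable {d : ℕ} {P₀ : DyadicCube d} {α : DyadicCube d → ℝ≥0∞} {A : ℝ≥0∞} {m : ℕ}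
  {k : ℕ} {f : Fin k → (Fin d → ℝ) → ℝ≥0∞}

lemma ECal_subset (Q : DyadicCube d) : ECal P₀ α A m f Q ⊆ Q.toSet :=
  Set.diff_subset

lemma ECal_measurable (Q : DyadicCube d) : MeasurableSet (ECal P₀ α A m f Q) :=
  (measurableSet_toSet Q).diff (MeasurableSet.iUnion fun R => measurableSet_toSet _)

lemma ECal_vol (hd : 0 < d) (hm : 1 ≤ m) (hk : 0 < k) (hα : Carleson P₀ α A)
    (hA0 : A ≠ 0) (hAt : A ≠ ⊤)
    (hfint : ∀ i, ∫⁻ y in P₀.toSet, f i y < ⊤)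
    {Q : DyadicCube d} (hQ : Q ∈ stopSet P₀ α A m f) :
    1 / 2 * Q.vol ≤ volume (ECal P₀ α A m f Q) := by
  classical
  have hQmem : Q.In P₀ := stopSet_In hQ
  set U : Set (Fin d → ℝ) :=
    ⋃ (R : {R : DyadicCube d // R ∈ stopSet P₀ α A m f ∧ R.toSet ⊆ Q.toSet ∧ R ≠ Q}),
      (R : DyadicCube d).toSet with hU
  have hUQ : U ⊆ Q.toSet := Set.iUnion_subset fun R => R.2.2.1
  have hUmeas : MeasurableSet U := MeasurableSet.iUnion fun R => measurableSet_toSet _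
  -- the subfamilies of children
  set SA : Fin k → Set (DyadicCube d) := fun i =>
    {C | C ∈ chil P₀ α A m f Q ∧ 8 * (k:ℝ≥0∞) * Q.avg (f i) < C.avg (f i)} with hSA
  set SB : Set (DyadicCube d) :=
    {C | C ∈ chil P₀ α A m f Q ∧ ∃ g : ℕ,
      (∀ l, l ≤ g → (ancestor (l*m) C).In Q) ∧
      8 * A < ∑ l ∈ Finset.range (g+1), α (ancestor (l*m) C)} with hSB
  -- U is covered by the children, which satisfy a stopping condition
  have hcov : U ⊆ (⋃ i : Fin k, ⋃ C : ↥(SA i), (C : DyadicCube d).toSet) ∪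
      ⋃ C : ↥SB, (C : DyadicCube d).toSet := by
    intro y hy
    rw [hU, Set.mem_iUnion] at hy
    obtain ⟨R, hyR⟩ := hy
    obtain ⟨C, hC, hsub⟩ := exists_child hd hm hQ R.2.1 R.2.2.1 R.2.2.2
    rcases chil_spec hα hC with ⟨i, hi⟩ | hB
    · left
      rw [Set.mem_iUnion]
      exact ⟨i, Set.mem_iUnion.mpr ⟨⟨C, hC, hi⟩, hsub hyR⟩⟩
    · right
      exact Set.mem_iUnion.mpr ⟨⟨C, hC, hB⟩, hsub hyR⟩
  -- volume bounds
  have hvolA : ∀ i : Fin k, volume (⋃ C : ↥(SA i), (C : DyadicCube d).toSet) ≤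
      Q.vol / (8 * k) := by
    intro i
    rw [ENNReal.le_div_iff_mul_le
      (Or.inl (mul_ne_zero (by norm_num) (Nat.cast_ne_zero.mpr hk.ne')))
      (Or.inl (ENNReal.mul_ne_top (by norm_num) (ENNReal.natCast_ne_top k)))]
    calc volume (⋃ C : ↥(SA i), (C : DyadicCube d).toSet) * (8 * k)
        ≤ (∑' C : ↥(SA i), (C : DyadicCube d).vol) * (8 * k) :=
          mul_le_mul_left (measure_iUnion_le _) _
      _ ≤ Q.vol := chA_bound hd hm hQmem i (hfint i) (SA i) (fun C hC => hC)
  have hvolB : volume (⋃ C : ↥SB, (C : DyadicCube d).toSet) ≤ Q.vol / 8 := by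
    rw [ENNReal.le_div_iff_mul_le (Or.inl (by norm_num)) (Or.inl (by norm_num))]
    calc volume (⋃ C : ↥SB, (C : DyadicCube d).toSet) * 8
        ≤ (∑' C : ↥SB, (C : DyadicCube d).vol) * 8 :=
          mul_le_mul_left (measure_iUnion_le _) _
      _ ≤ Q.vol := chB_bound hd hm hα hQmem hA0 hAt SB (fun C hC => hC)
  have hUbound : volume U ≤ (k : ℝ≥0∞) * (Q.vol / (8 * k)) + Q.vol / 8 := by
    calc volume U ≤ volume ((⋃ i : Fin k, ⋃ C : ↥(SA i), (C : DyadicCube d).toSet) ∪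
          ⋃ C : ↥SB, (C : DyadicCube d).toSet) := measure_mono hcov
      _ ≤ volume (⋃ i : Fin k, ⋃ C : ↥(SA i), (C : DyadicCube d).toSet) +
          volume (⋃ C : ↥SB, (C : DyadicCube d).toSet) := measure_union_le _ _
      _ ≤ (∑' i : Fin k, volume (⋃ C : ↥(SA i), (C : DyadicCube d).toSet)) +
          Q.vol / 8 := add_le_add (measure_iUnion_le _) hvolB
      _ ≤ (∑' _i : Fin k, Q.vol / (8 * k)) + Q.vol / 8 :=
          add_le_add (ENNReal.tsum_le_tsum hvolA) (le_refl _)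
      _ = (k : ℝ≥0∞) * (Q.vol / (8 * k)) + Q.vol / 8 := by
          rw [tsum_fintype]
          simp [Finset.sum_const, Finset.card_univ, nsmul_eq_mul]
  -- volume U ≤ Q.vol / 2
  have hW4 : volume U * 4 ≤ Q.vol := by
    calc volume U * 4 ≤ ((k : ℝ≥0∞) * (Q.vol / (8 * k)) + Q.vol / 8) * 4 :=
          mul_le_mul_left hUbound _
      _ = (k : ℝ≥0∞) * (Q.vol / (8 * k)) * 4 + (Q.vol / 8) * 4 := by ring
      _ ≤ Q.vol / 2 + Q.vol / 2 := by
          apply add_le_add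
          · rw [ENNReal.le_div_iff_mul_le (Or.inl (by norm_num)) (Or.inl (by norm_num))]
            calc (k : ℝ≥0∞) * (Q.vol / (8 * k)) * 4 * 2
                = (8 * k) * (Q.vol / (8 * k)) := by ring
              _ ≤ Q.vol := ENNReal.mul_div_le
          · rw [ENNReal.le_div_iff_mul_le (Or.inl (by norm_num)) (Or.inl (by norm_num))]
            have h48 : (Q.vol / 8) * 4 * 2 = (Q.vol / 8) * 8 := by ring
            rw [h48, ENNReal.div_mul_cancel (by norm_num) (by norm_num)]
      _ = Q.vol := ENNReal.add_halves _
  have hWhalf : volume U ≤ Q.vol / 2 := by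
    rw [ENNReal.le_div_iff_mul_le (Or.inl (by norm_num)) (Or.inl (by norm_num))]
    calc volume U * 2 ≤ volume U * 4 := mul_le_mul_right (by norm_num) _
      _ ≤ Q.vol := hW4
  -- conclude
  have hdiff : volume (ECal P₀ α A m f Q) = Q.vol - volume U := by
    rw [ECal, ← hU]
    exact measure_diff hUQ hUmeas.nullMeasurableSet
      (lt_of_le_of_lt (measure_mono hUQ) (vol_lt_top Q)).ne
  rw [hdiff]
  calc 1 / 2 * Q.vol = Q.vol / 2 := by
        rw [div_eq_mul_inv, div_eq_mul_inv, one_mul, mul_comm]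
    _ = Q.vol - Q.vol / 2 := (ENNReal.sub_half (vol_ne_top Q)).symm
    _ ≤ Q.vol - volume U := tsub_le_tsub_left hWhalf _

lemma ECal_pairwise (hd : 0 < d) :
    (stopSet P₀ α A m f).Pairwise
      (fun Q Q' => Disjoint (ECal P₀ α A m f Q) (ECal P₀ α A m f Q')) := by
  have asym : ∀ Q Q', Q ∈ stopSet P₀ α A m f → Q' ∈ stopSet P₀ α A m f → Q ≠ Q' →
      Q.gen ≤ Q'.gen → Disjoint (ECal P₀ α A m f Q) (ECal P₀ α A m f Q') := by
    intro Q Q' hQ hQ' hne hg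
    by_cases hdis : Disjoint Q.toSet Q'.toSet
    · exact hdis.mono (ECal_subset Q) (ECal_subset Q')
    · obtain ⟨z, hz, hz'⟩ := Set.not_disjoint_iff.mp hdis
      have hss : Q'.toSet ⊆ Q.toSet := toSet_subset hg hz' hz
      have hEQ : Disjoint (ECal P₀ α A m f Q) Q'.toSet := by
        rw [Set.disjoint_left]
        intro y hy hyQ'
        exact hy.2 (Set.mem_iUnion.mpr ⟨⟨Q', hQ', hss, fun h => hne h.symm⟩, hyQ'⟩)
      exact hEQ.mono_right (ECal_subset Q')
  intro Q hQ Q' hQ' hne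
  rcases le_total Q.gen Q'.gen with hg | hg
  · exact asym Q Q' hQ hQ' hne hg
  · exact (asym Q' Q hQ' hQ hne.symm hg).symm

end ECalSec
section Pointwise
open DyadicCube

variable {d : ℕ} {P₀ : DyadicCube d} {α : DyadicCube d → ℝ≥0∞} {A : ℝ≥0∞} {m : ℕ}
  {k : ℕ} {f : Fin k → (Fin d → ℝ) → ℝ≥0∞} {x : Fin d → ℝ}

/-- reindex the sliced shift along the chain of cubes containing `x` -/
lemma slicedShift_eq (hm : 1 ≤ m) (hx : x ∈ P₀.toSet) :
    slicedShift P₀ α m f x = ∑' j : ℕ, (if 1 ≤ j then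
      α (chn P₀ m x j) * ∏ i, (chn P₀ m x (j-1)).avg (f i) else 0) := by
  classical
  have hsupp : ∀ j : ↥(Function.support fun jj : ℕ => if 1 ≤ jj then
      α (chn P₀ m x jj) * ∏ i, (chn P₀ m x (jj-1)).avg (f i) else 0), 1 ≤ j.1 := by
    intro j
    by_contra h
    exact j.2 (if_neg h)
  apply tsum_eq_tsum_of_ne_zero_bij
    (i := fun j => (⟨chn P₀ m x j.1, (sliced_chn hx j.1).1,
      ⟨j.1, hsupp j, (sliced_chn hx j.1).2⟩⟩ :
      {Q : DyadicCube d // Q.In P₀ ∧ ∃ j : ℕ, 1 ≤ j ∧ Q.gen = P₀.gen + j * m}))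
  · -- injectivity
    intro j j' h
    have h2 := congrArg Subtype.val h
    simp only at h2
    exact Subtype.ext (chn_inj hm h2)
  · -- support condition
    intro Q hQ
    rw [Function.mem_support] at hQ
    have hxQ : x ∈ Q.1.toSet := by
      by_contra hxQ
      apply hQ
      rw [Set.indicator_of_notMem hxQ, mul_zero]
    obtain ⟨j, hj1, hjg⟩ := Q.2.2
    have hQchn : Q.1 = chn P₀ m x j := sliced_eq_chn ⟨Q.2.1, hjg⟩ hxQ
    have hanc : ancestor m Q.1 = chn P₀ m x (j-1) := by
      rw [hQchn, show j = (j-1)+1 by omega, anc_chn, Nat.add_sub_cancel]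
    have hjsupp : (fun jj : ℕ => if 1 ≤ jj then
        α (chn P₀ m x jj) * ∏ i, (chn P₀ m x (jj-1)).avg (f i) else 0) j ≠ 0 := by
      simp only [if_pos hj1]
      intro h0
      apply hQ
      show α Q.1 * (∏ i, (ancestor m Q.1).avg (f i)) * Q.1.toSet.indicator 1 x = 0
      rw [hanc, Set.indicator_of_mem hxQ, Pi.one_apply, mul_one, hQchn]
      exact h0
    exact ⟨⟨j, hjsupp⟩, Subtype.ext hQchn.symm⟩
  · -- values agree
    intro j
    have hj1 : 1 ≤ j.1 := hsupp j
    show α (chn P₀ m x j.1) * (∏ i, (ancestor m (chn P₀ m x j.1)).avg (f i)) *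
        (chn P₀ m x j.1).toSet.indicator 1 x = _
    have hanc : ancestor m (chn P₀ m x j.1) = chn P₀ m x (j.1-1) := by
      rw [show j.1 = (j.1-1)+1 by omega, anc_chn, Nat.add_sub_cancel]
    rw [hanc, Set.indicator_of_mem (mem_chn x j.1), Pi.one_apply, mul_one, if_pos hj1]

/-- the chain sums of `α` over any block with common stopping cube are at most `9A`. -/
lemma sum_alpha_le (hα : Carleson P₀ α A) (hm : 1 ≤ m) (hx : x ∈ P₀.toSet)
    (P : DyadicCube d) (F : Finset ℕ)
    (hF : ∀ j ∈ F, 1 ≤ j ∧ (stopData P₀ α A m f (j-1) (chn P₀ m x (j-1))).1 = P) :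
    ∑ j ∈ F, α (chn P₀ m x j) ≤ 9 * A := by
  classical
  rcases F.eq_empty_or_nonempty with rfl | hne
  · simp
  obtain ⟨jM, hjMmem, hjMmax⟩ : ∃ jM, jM ∈ F ∧ ∀ j ∈ F, j ≤ jM :=
    ⟨F.max' hne, F.max'_mem hne, fun j hj => F.le_max' j hj⟩
  have hjM1 : 1 ≤ jM := (hF jM hjMmem).1
  obtain ⟨b, rfl⟩ : ∃ b, jM = b + 1 := ⟨jM - 1, by omega⟩
  have hbP : (stopData P₀ α A m f b (chn P₀ m x b)).1 = P := by
    have h2 := (hF (b+1) hjMmem).2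
    simpa using h2
  obtain ⟨n, hn, hs⟩ := stopData_chn (α := α) (A := A) (m := m) (f := f) hx b
  have hPrep : P = chn P₀ m x (b - n) := by rw [← hbP, hs]
  have hlow : ∀ j ∈ F, b - n + 1 ≤ j := by
    intro j hjF
    obtain ⟨hj1, hjP⟩ := hF j hjF
    obtain ⟨n', hn', hs'⟩ := stopData_chn (α := α) (A := A) (m := m) (f := f) hx (j-1)
    have h1 : P = chn P₀ m x (j - 1 - n') := by rw [← hjP, hs']
    have heq := chn_inj hm (h1.symm.trans hPrep)
    omega
  have hsub : F ⊆ Finset.Icc (b - n + 1) (b + 1) := by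
    intro j hj
    rw [Finset.mem_Icc]
    exact ⟨hlow j hj, hjMmax j hj⟩
  calc ∑ j ∈ F, α (chn P₀ m x j)
      ≤ ∑ j ∈ Finset.Icc (b - n + 1) (b + 1), α (chn P₀ m x j) :=
        Finset.sum_le_sum_of_subset hsub
    _ = ∑ j ∈ Finset.Icc (b - n + 1) b, α (chn P₀ m x j) + α (chn P₀ m x (b+1)) :=
        Finset.sum_Icc_succ_top (by omega) _
    _ ≤ 8 * A + A := by
        apply add_le_add
        · calc ∑ j ∈ Finset.Icc (b - n + 1) b, α (chn P₀ m x j)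
              ≤ ∑ j ∈ Finset.Icc (b - n) b, α (chn P₀ m x j) :=
                Finset.sum_le_sum_of_subset (by
                  intro j hj
                  rw [Finset.mem_Icc] at hj ⊢
                  omega)
            _ = ∑ l ∈ Finset.range (n + 1), α (ancestor (l*m) (chn P₀ m x b)) := by
                have hterm : ∀ l ∈ Finset.range (n+1),
                    α (ancestor (l*m) (chn P₀ m x b)) = α (chn P₀ m x (b - l)) := by
                  intro l hl
                  rw [anc_chain l b (by rw [Finset.mem_range] at hl; omega)]
                rw [Finset.sum_congr rfl hterm]
                apply Finset.sum_nbij' (fun j => b - j) (fun l => b - l)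
                · intro a ha
                  rw [Finset.mem_Icc] at ha
                  rw [Finset.mem_range]
                  omega
                · intro l hl
                  rw [Finset.mem_range] at hl
                  rw [Finset.mem_Icc]
                  omega
                · intro a ha
                  rw [Finset.mem_Icc] at ha
                  omega
                · intro l hl
                  rw [Finset.mem_range] at hl
                  omega
                · intro a ha
                  rw [Finset.mem_Icc] at ha
                  rw [show b - (b - a) = a by omega]
            _ ≤ 8 * A := by
                have h8 := sigma_le (m := m) (f := f) hα hx b
                rw [hs] at h8
                exact h8
        · exact alpha_le hα (sliced_chn hx (b+1)).1
    _ = 9 * A := by ring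

end Pointwise
section MainBound
open DyadicCube

variable {d : ℕ} {P₀ : DyadicCube d} {α : DyadicCube d → ℝ≥0∞} {A : ℝ≥0∞} {m : ℕ}
  {k : ℕ} {f : Fin k → (Fin d → ℝ) → ℝ≥0∞} {x : Fin d → ℝ}

lemma pointwise_bound (hα : Carleson P₀ α A) (hm : 1 ≤ m) (hk : 0 < k)
    (hx : x ∈ P₀.toSet) :
    slicedShift P₀ α m f x ≤
      (8*(k:ℝ≥0∞))^k * (9*A) * sparseOp (stopSet P₀ α A m f) f x := by
  classical
  rw [slicedShift_eq hm hx]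
  have h1 : ∀ j : ℕ,
      (if 1 ≤ j then α (chn P₀ m x j) * ∏ i, (chn P₀ m x (j-1)).avg (f i) else 0)
      ≤ (if 1 ≤ j then α (chn P₀ m x j) * ((8*(k:ℝ≥0∞))^k *
          ∏ i, ((stopData P₀ α A m f (j-1) (chn P₀ m x (j-1))).1).avg (f i)) else 0) := by
    intro j
    split_ifs with hj
    · apply mul_le_mul_right
      calc ∏ i, (chn P₀ m x (j-1)).avg (f i)
          ≤ ∏ i, (8*(k:ℝ≥0∞) *
              ((stopData P₀ α A m f (j-1) (chn P₀ m x (j-1))).1).avg (f i)) :=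
            Finset.prod_le_prod' (fun i _ => avg_le_stop hx hk (j-1) i)
        _ = (8*(k:ℝ≥0∞))^k *
              ∏ i, ((stopData P₀ α A m f (j-1) (chn P₀ m x (j-1))).1).avg (f i) := by
            rw [Finset.prod_mul_distrib, Finset.prod_const, Finset.card_univ, Fintype.card_fin]
    · exact le_refl _
  refine le_trans (ENNReal.tsum_le_tsum h1) ?_
  have h2 : ∀ j : ℕ,
      (if 1 ≤ j then α (chn P₀ m x j) * ((8*(k:ℝ≥0∞))^k *
          ∏ i, ((stopData P₀ α A m f (j-1) (chn P₀ m x (j-1))).1).avg (f i)) else 0)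
      = ∑' Q : ↥(stopSet P₀ α A m f),
          (if 1 ≤ j ∧ (Q:DyadicCube d) = (stopData P₀ α A m f (j-1) (chn P₀ m x (j-1))).1
            then α (chn P₀ m x j) else 0)
          * ((8*(k:ℝ≥0∞))^k * ∏ i, (Q:DyadicCube d).avg (f i)) := by
    intro j
    by_cases hj : 1 ≤ j
    · rw [if_pos hj]
      have hterm : ∀ Q : ↥(stopSet P₀ α A m f),
          (if 1 ≤ j ∧ (Q:DyadicCube d) = (stopData P₀ α A m f (j-1) (chn P₀ m x (j-1))).1
            then α (chn P₀ m x j) else 0)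
          * ((8*(k:ℝ≥0∞))^k * ∏ i, (Q:DyadicCube d).avg (f i))
          = (if Q = (⟨(stopData P₀ α A m f (j-1) (chn P₀ m x (j-1))).1,
              (stop_mem hx (j-1)).1⟩ : ↥(stopSet P₀ α A m f)) then
              α (chn P₀ m x j) * ((8*(k:ℝ≥0∞))^k *
                ∏ i, ((stopData P₀ α A m f (j-1) (chn P₀ m x (j-1))).1).avg (f i)) else 0) := by
        intro Q
        by_cases hQ : Q = (⟨(stopData P₀ α A m f (j-1) (chn P₀ m x (j-1))).1,
            (stop_mem hx (j-1)).1⟩ : ↥(stopSet P₀ α A m f))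
        · subst hQ
          rw [if_pos ⟨hj, rfl⟩, if_pos rfl]
        · rw [if_neg hQ, if_neg, zero_mul]
          intro hc
          exact hQ (Subtype.ext hc.2)
      rw [tsum_congr hterm, tsum_ite_eq]
    · rw [if_neg hj]
      symm
      apply ENNReal.tsum_eq_zero.mpr
      intro Q
      rw [if_neg (fun hc => hj hc.1), zero_mul]
  rw [tsum_congr h2, ENNReal.tsum_comm]
  have hrhs : (8*(k:ℝ≥0∞))^k * (9*A) * sparseOp (stopSet P₀ α A m f) f x
      = ∑' Q : ↥(stopSet P₀ α A m f), ((8*(k:ℝ≥0∞))^k * (9*A)) *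
          ((∏ i, (Q:DyadicCube d).avg (f i)) * (Q:DyadicCube d).toSet.indicator 1 x) := by
    rw [ENNReal.tsum_mul_left]
    rfl
  rw [hrhs]
  apply ENNReal.tsum_le_tsum
  intro Q
  rw [ENNReal.tsum_mul_right]
  by_cases hxQ : x ∈ (Q:DyadicCube d).toSet
  · have hsum : (∑' j : ℕ, (if 1 ≤ j ∧
        (Q:DyadicCube d) = (stopData P₀ α A m f (j-1) (chn P₀ m x (j-1))).1
          then α (chn P₀ m x j) else 0)) ≤ 9 * A := by
      rw [ENNReal.tsum_eq_iSup_sum]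
      apply iSup_le
      intro s
      rw [← Finset.sum_filter]
      apply sum_alpha_le hα hm hx (Q:DyadicCube d)
      intro j hj
      rw [Finset.mem_filter] at hj
      exact ⟨hj.2.1, hj.2.2.symm⟩
    calc (∑' j : ℕ, (if 1 ≤ j ∧
          (Q:DyadicCube d) = (stopData P₀ α A m f (j-1) (chn P₀ m x (j-1))).1
            then α (chn P₀ m x j) else 0))
          * ((8*(k:ℝ≥0∞))^k * ∏ i, (Q:DyadicCube d).avg (f i))
        ≤ (9*A) * ((8*(k:ℝ≥0∞))^k * ∏ i, (Q:DyadicCube d).avg (f i)) :=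
          mul_le_mul_left hsum _
      _ = ((8*(k:ℝ≥0∞))^k * (9*A)) *
          ((∏ i, (Q:DyadicCube d).avg (f i)) * (Q:DyadicCube d).toSet.indicator 1 x) := by
          rw [Set.indicator_of_mem hxQ, Pi.one_apply, mul_one]
          ring
  · have hzero : (∑' j : ℕ, (if 1 ≤ j ∧
        (Q:DyadicCube d) = (stopData P₀ α A m f (j-1) (chn P₀ m x (j-1))).1
          then α (chn P₀ m x j) else 0)) = 0 := by
      apply ENNReal.tsum_eq_zero.mpr
      intro j
      apply if_neg
      intro hc
      apply hxQ
      rw [hc.2]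
      exact chn_subset_stop hx (j-1) (mem_chn x (j-1))
    rw [hzero, zero_mul]
    exact zero_le

lemma const_le (hk : 0 < k) (hd : 0 < d) :
    (9:ℝ≥0∞) * (8*(k:ℝ≥0∞))^k ≤ 2^(2 + k*(6 + d*(2*k-1))) := by
  have h2k : ∀ n, 1 ≤ n → 2*n ≤ 2^n := by
    intro n hn
    induction n with
    | zero => omega
    | succ n ih =>
        rcases Nat.eq_zero_or_pos n with rfl | hn'
        · norm_num
        · have h1 := ih hn'
          have h2 : 2 ≤ 2^n := by omega
          calc 2*(n+1) = 2*n + 2 := by ring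
            _ ≤ 2^n + 2^n := by omega
            _ = 2^(n+1) := by ring
  have h8k : 8*k ≤ 2^(k+2) := by
    have h1 := h2k k hk
    calc 8*k = 4*(2*k) := by ring
      _ ≤ 4*2^k := by omega
      _ = 2^(k+2) := by rw [pow_add]; ring
  have hexp : 4 + (k+2)*k ≤ 2 + k*(6 + d*(2*k-1)) := by
    have hd1 : 2*k-1 ≤ d*(2*k-1) := Nat.le_mul_of_pos_left _ hd
    have hmono : k*(6 + (2*k-1)) ≤ k*(6 + d*(2*k-1)) :=
      Nat.mul_le_mul_left k (Nat.add_le_add_left hd1 6)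
    refine le_trans ?_ (Nat.add_le_add_left hmono 2)
    obtain ⟨t, rfl⟩ : ∃ t, k = t + 1 := ⟨k - 1, by omega⟩
    have hrw : 2*(t+1)-1 = 2*t+1 := by omega
    rw [hrw]
    nlinarith [Nat.zero_le (t*t)]
  have hN : (9 * (8*k)^k : ℕ) ≤ 2^(2 + k*(6 + d*(2*k-1))) := by
    calc 9 * (8*k)^k ≤ 16 * (2^(k+2))^k :=
        Nat.mul_le_mul (by norm_num) (Nat.pow_le_pow_left h8k k)
      _ = 2^(4 + (k+2)*k) := by
          rw [show (16:ℕ) = 2^4 by norm_num, ← pow_mul, ← pow_add]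
      _ ≤ 2^(2 + k*(6 + d*(2*k-1))) := Nat.pow_le_pow_right (by norm_num) hexp
  calc (9:ℝ≥0∞) * (8*(k:ℝ≥0∞))^k = ((9 * (8*k)^k : ℕ) : ℝ≥0∞) := by push_cast; ring
    _ ≤ ((2^(2 + k*(6 + d*(2*k-1))) : ℕ) : ℝ≥0∞) := by exact_mod_cast hN
    _ = 2^(2 + k*(6 + d*(2*k-1))) := by push_cast; ring

end MainBound

/-- pointwise sparse domination of the sliced shift: for `m ≥ 1` and
nonnegative integrable `f₁,…,f_k` there is a `(1/2)`-sparse `𝒮 ⊆ 𝒟(P₀)` with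
`𝒜^{m;0}_{P₀,α} f⃗(x) ≤ C₁ ‖α‖_{Car(P₀)} Σ_{Q∈𝒮} (∏⟨f_i⟩_Q) 1_Q(x)` on `P₀`,
with `C₁ = 2^{2+k(6+d(2k−1))}` independent of `m`. -/
theorem sliced_sparse_domination {d k : ℕ} (hk : 0 < k) (m : ℕ) (hm : 1 ≤ m)
    (P₀ : DyadicCube d) (α : DyadicCube d → ℝ≥0∞) (A : ℝ≥0∞) (hα : Carleson P₀ α A)
    (f : Fin k → (Fin d → ℝ) → ℝ≥0∞) (hf : ∀ i, Measurable (f i))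
    (hfint : ∀ i, ∫⁻ x in P₀.toSet, f i x < ⊤) :
    ∃ S : Set (DyadicCube d), (∀ Q ∈ S, Q.In P₀) ∧ Sparse (1 / 2) S ∧
      ∀ x ∈ P₀.toSet,
        slicedShift P₀ α m f x ≤
          2 ^ (2 + k * (6 + d * (2 * k - 1))) * A * sparseOp S f x := by
  classical
  have hSparse1 : Sparse (1/2 : ℝ≥0∞) ({P₀} : Set (DyadicCube d)) := by
    refine ⟨fun Q => Q.toSet, ?_, Set.pairwise_singleton _ _⟩
    intro Q hQ
    refine ⟨measurableSet_toSet Q, subset_rfl, ?_⟩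
    rw [show (1/2 : ℝ≥0∞) * Q.vol = Q.vol / 2 by
      rw [div_eq_mul_inv, div_eq_mul_inv, one_mul, mul_comm]]
    exact ENNReal.half_le_self
  have hIn1 : ∀ Q ∈ ({P₀} : Set (DyadicCube d)), Q.In P₀ := by
    intro Q hQ
    rw [Set.mem_singleton_iff.mp hQ]
    exact ⟨le_refl _, subset_rfl⟩
  have hone_le : (1:ℝ≥0∞) ≤ 2 ^ (2 + k * (6 + d * (2 * k - 1))) :=
    one_le_pow_of_one_le' (by norm_num : (1:ℝ≥0∞) ≤ 2) _
  have hsp1 : ∀ x : Fin d → ℝ, sparseOp ({P₀} : Set (DyadicCube d)) f x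
      = (∏ i, P₀.avg (f i)) * P₀.toSet.indicator 1 x := by
    intro x
    apply tsum_eq_single (⟨P₀, rfl⟩ : ↥({P₀} : Set (DyadicCube d)))
    intro b hb
    exact absurd (Subtype.ext (Set.mem_singleton_iff.mp b.2)) hb
  rcases Nat.eq_zero_or_pos d with hd0 | hd
  · -- dimension 0 : all cubes coincide with the whole space
    subst hd0
    refine ⟨{P₀}, hIn1, hSparse1, ?_⟩
    intro x hx
    have huniv : ∀ Q : DyadicCube 0, Q.toSet = Set.univ :=
      fun Q => Set.eq_univ_iff_forall.mpr (fun y i => i.elim0)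
    have hv1 : ∀ Q : DyadicCube 0, Q.vol = 1 := by
      intro Q; rw [vol_eq, pow_zero]
    have havg : ∀ (Q : DyadicCube 0) (g : (Fin 0 → ℝ) → ℝ≥0∞), Q.avg g = P₀.avg g := by
      intro Q g
      rw [DyadicCube.avg, DyadicCube.avg, huniv Q, huniv P₀, hv1, hv1]
    have hterm : ∀ Q : {Q : DyadicCube 0 // Q.In P₀ ∧ ∃ j : ℕ, 1 ≤ j ∧ Q.gen = P₀.gen + j * m},
        α Q.1 * (∏ i, (ancestor m Q.1).avg (f i)) * Q.1.toSet.indicator 1 x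
        = α Q.1 * ∏ i, P₀.avg (f i) := by
      intro Q
      rw [Set.indicator_of_mem (by rw [huniv]; exact Set.mem_univ x), Pi.one_apply, mul_one]
      congr 1
      exact Finset.prod_congr rfl (fun i _ => havg _ _)
    have hLHS : slicedShift P₀ α m f x ≤ A * ∏ i, P₀.avg (f i) := by
      simp only [DyadicCube.slicedShift]
      rw [tsum_congr hterm, ENNReal.tsum_mul_right]
      apply mul_le_mul_left
      calc (∑' Q : {Q : DyadicCube 0 // Q.In P₀ ∧ ∃ j : ℕ, 1 ≤ j ∧ Q.gen = P₀.gen + j * m},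
            α Q.1)
          = ∑' Q : {Q : DyadicCube 0 // Q.In P₀ ∧ ∃ j : ℕ, 1 ≤ j ∧ Q.gen = P₀.gen + j * m},
            (fun R : {R : DyadicCube 0 // R.In P₀} => α R.1 * R.1.vol) ⟨Q.1, Q.2.1⟩ := by
            apply tsum_congr
            intro Q
            show α Q.1 = α Q.1 * Q.1.vol
            rw [hv1, mul_one]
        _ ≤ ∑' R : {R : DyadicCube 0 // R.In P₀}, α R.1 * R.1.vol :=
            ENNReal.tsum_comp_le_tsum_of_injective
              (f := fun Q : {Q : DyadicCube 0 // Q.In P₀ ∧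
                  ∃ j : ℕ, 1 ≤ j ∧ Q.gen = P₀.gen + j * m} =>
                (⟨Q.1, Q.2.1⟩ : {R : DyadicCube 0 // R.In P₀}))
              (fun Q Q' h => Subtype.ext
                (show Q.1 = Q'.1 from congrArg
                  (fun R : {R : DyadicCube 0 // R.In P₀} => R.1) h))
              (fun R : {R : DyadicCube 0 // R.In P₀} => α R.1 * R.1.vol)
        _ ≤ A * P₀.vol := hα P₀ ⟨le_refl _, subset_rfl⟩
        _ = A := by rw [hv1, mul_one]
    refine le_trans hLHS ?_
    rw [hsp1 x, Set.indicator_of_mem hx, Pi.one_apply, mul_one]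
    calc A * ∏ i, P₀.avg (f i)
        ≤ 2 ^ (2 + k * (6 + 0 * (2 * k - 1))) * (A * ∏ i, P₀.avg (f i)) :=
          le_mul_of_one_le_left (zero_le) hone_le
      _ = 2 ^ (2 + k * (6 + 0 * (2 * k - 1))) * A * ∏ i, P₀.avg (f i) := by ring
  by_cases hA0 : A = 0
  · refine ⟨{P₀}, hIn1, hSparse1, ?_⟩
    intro x hx
    have hz : slicedShift P₀ α m f x = 0 := by
      simp only [DyadicCube.slicedShift]
      apply ENNReal.tsum_eq_zero.mpr
      intro Q
      have hαQ : α Q.1 = 0 := le_antisymm (hA0 ▸ alpha_le hα Q.2.1) (zero_le)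
      rw [hαQ, zero_mul, zero_mul]
    rw [hz]
    exact zero_le
  by_cases hAt : A = ⊤
  · refine ⟨{P₀}, hIn1, hSparse1, ?_⟩
    intro x hx
    by_cases hprod : ∏ i, P₀.avg (f i) = 0
    · obtain ⟨i, _, hi0⟩ := Finset.prod_eq_zero_iff.mp hprod
      have hint0 : ∫⁻ y in P₀.toSet, f i y = 0 := by
        rcases ENNReal.div_eq_zero_iff.mp hi0 with h | h
        · exact h
        · exact absurd h (vol_ne_top P₀)
      have hz : slicedShift P₀ α m f x = 0 := by
        simp only [DyadicCube.slicedShift]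
        apply ENNReal.tsum_eq_zero.mpr
        intro Q
        obtain ⟨j, hj1, hjg⟩ := Q.2.2
        have hgle : P₀.gen ≤ (ancestor m Q.1).gen := by
          rw [ancestor_gen, hjg]
          have h1 : (m:ℤ) ≤ (j:ℤ) * m :=
            le_mul_of_one_le_left (by positivity) (by exact_mod_cast hj1)
          omega
        have hancIn : (ancestor m Q.1).In P₀ :=
          ⟨hgle, toSet_subset hgle (subset_ancestor m Q.1 (corner_mem Q.1))
            (Q.2.1.2 (corner_mem Q.1))⟩
        have h00 : ∫⁻ y in (ancestor m Q.1).toSet, f i y = 0 :=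
          le_antisymm (le_trans (lintegral_mono_set hancIn.2) (le_of_eq hint0)) (zero_le)
        have hanc0 : (ancestor m Q.1).avg (f i) = 0 := by
          rw [DyadicCube.avg, h00, ENNReal.zero_div]
        rw [Finset.prod_eq_zero (Finset.mem_univ i) hanc0, mul_zero, zero_mul]
      rw [hz]
      exact zero_le
    · have hRHS : 2 ^ (2 + k * (6 + d * (2 * k - 1))) * A *
          sparseOp ({P₀} : Set (DyadicCube d)) f x = ⊤ := by
        rw [hsp1 x, Set.indicator_of_mem hx, Pi.one_apply, mul_one, hAt,
          ENNReal.mul_top (pow_ne_zero _ (by norm_num : (2:ℝ≥0∞) ≠ 0)),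
          ENNReal.top_mul hprod]
      rw [hRHS]
      exact le_top
  -- main case
  refine ⟨stopSet P₀ α A m f, fun Q hQ => stopSet_In hQ,
    ⟨ECal P₀ α A m f, fun Q hQ => ⟨ECal_measurable Q, ECal_subset Q,
      ECal_vol hd hm hk hα hA0 hAt hfint hQ⟩, ECal_pairwise hd⟩, ?_⟩
  intro x hx
  refine le_trans (pointwise_bound hα hm hk hx) ?_
  apply mul_le_mul_left
  calc (8*(k:ℝ≥0∞))^k * (9*A) = ((9:ℝ≥0∞) * (8*(k:ℝ≥0∞))^k) * A := by ring
    _ ≤ 2 ^ (2 + k * (6 + d * (2 * k - 1))) * A := mul_le_mul_left (const_le hk hd) A
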